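/- arXiv:1811.12824 — 2 statements merged into one kernel-verified Lean document; each statement's English description precedes it below -/
import Mathlib

section
/- Let X ~ Bin(k, r/n) and Y ~ Bin(n−k, r/n) be independent, and define p_-(r) := Pr(X > Y), p_0(r) := Pr(X = Y), and p'(r) := Pr(Y = 0). For every constant c > 0 and every ε > 0 there exist constants C, δ, n0 > 0 such that for all n ≥ n0, all λ with C ln n ≤ λ ≤ n^c, all k with 0 < k ≤ 3n/λ, and all r with 0 < r ≤ δ·λ^{1/4}: (1−ε)·(kr/n)·e^{−r} < p_-(r) < (1+ε)·(kr/n)·e^{−r}, (1−ε)·e^{−r} < p_0(r) < (1+ε)·e^{−r}, and (1−ε)·e^{−r} < p'(r) < (1+ε)·e^{−r}. -/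
open scoped BigOperators

namespace BinomialEstimates

/-- `binP m p a = Pr(Bin(m,p) = a)`, the binomial probability mass function. -/
noncomputable def binP (m : ℕ) (p : ℝ) (a : ℕ) : ℝ :=
  (m.choose a : ℝ) * p ^ a * (1 - p) ^ (m - a)

/-- `Pr(X > Y)` for independent `X ~ Bin(k, p)` and `Y ~ Bin(n−k, p)`. -/
noncomputable def pMinus (n k : ℕ) (p : ℝ) : ℝ :=
  ∑ a ∈ Finset.range (k + 1), ∑ b ∈ Finset.range (n - k + 1),
    if b < a then binP k p a * binP (n - k) p b else 0

/-- `Pr(X = Y)` for independent `X ~ Bin(k, p)` and `Y ~ Bin(n−k, p)`. -/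
noncomputable def pZero (n k : ℕ) (p : ℝ) : ℝ :=
  ∑ a ∈ Finset.range (k + 1), ∑ b ∈ Finset.range (n - k + 1),
    if b = a then binP k p a * binP (n - k) p b else 0

/-- `Pr(Y = 0)` for `Y ~ Bin(n−k, p)`. -/
noncomputable def pPrime (n k : ℕ) (p : ℝ) : ℝ := binP (n - k) p 0

/-! ### Auxiliary lemmas -/

lemma binP_nonneg {m : ℕ} {p : ℝ} (h0 : 0 ≤ p) (h1 : p ≤ 1) (a : ℕ) : 0 ≤ binP m p a := by
  unfold binP
  have : (0:ℝ) ≤ 1 - p := by linarith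
  positivity

lemma binP_zero (m : ℕ) (p : ℝ) : binP m p 0 = (1 - p) ^ m := by
  simp [binP]

lemma binP_one (k : ℕ) (p : ℝ) : binP k p 1 = (k : ℝ) * p * (1 - p) ^ (k - 1) := by
  simp [binP]

lemma binP_le {m : ℕ} {p : ℝ} (h0 : 0 ≤ p) (h1 : p ≤ 1) (b : ℕ) :
    binP m p b ≤ ((m : ℝ) * p) ^ b * (1 - p) ^ (m - b) := by
  unfold binP
  have hq : (0:ℝ) ≤ 1 - p := by linarith
  have hc : ((m.choose b : ℕ) : ℝ) ≤ (m : ℝ) ^ b := by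
    exact_mod_cast Nat.cast_le.mpr (Nat.choose_le_pow m b)
  rw [mul_pow]
  have := mul_le_mul_of_nonneg_right hc (pow_nonneg h0 b)
  nlinarith [pow_nonneg hq (m - b), pow_nonneg h0 b]

lemma binP_le' {m : ℕ} {p : ℝ} (h0 : 0 ≤ p) (h1 : p ≤ 1) (b : ℕ) :
    binP m p b ≤ ((m : ℝ) * p) ^ b := by
  calc binP m p b ≤ ((m : ℝ) * p) ^ b * (1 - p) ^ (m - b) := binP_le h0 h1 b
    _ ≤ ((m : ℝ) * p) ^ b * 1 := by
        apply mul_le_mul_of_nonneg_left _ (by positivity)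
        exact pow_le_one₀ (by linarith) (by linarith)
    _ = ((m : ℝ) * p) ^ b := by ring

lemma pow_one_sub_le_exp {p : ℝ} (h1 : p ≤ 1) (j : ℕ) :
    (1 - p) ^ j ≤ Real.exp (-((j : ℝ) * p)) := by
  have h : 1 - p ≤ Real.exp (-p) := by
    have := Real.add_one_le_exp (-p); linarith
  calc (1 - p) ^ j ≤ (Real.exp (-p)) ^ j := pow_le_pow_left₀ (by linarith) h j
    _ = Real.exp (-((j:ℝ) * p)) := by rw [← Real.exp_nat_mul]; ring_nf

lemma exp_le_one_sub {p : ℝ} (h0 : 0 ≤ p) (h1 : p ≤ 1/5) :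
    Real.exp (-(p + p^2)) ≤ 1 - p := by
  have hx : 0 ≤ (p + p^2)/2 := by positivity
  have h1e : 1 + (p + p^2)/2 ≤ Real.exp ((p + p^2)/2) := by
    have := Real.add_one_le_exp ((p + p^2)/2); linarith
  have hsq : (1 + (p + p^2)/2)^2 ≤ Real.exp (p + p^2) := by
    calc (1 + (p + p^2)/2)^2 ≤ (Real.exp ((p + p^2)/2))^2 := by
          apply pow_le_pow_left₀ (by positivity) h1e
      _ = Real.exp (p + p^2) := by rw [← Real.exp_nat_mul]; ring_nf
  have hkey : 1 ≤ Real.exp (p + p^2) * (1 - p) := by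
    have hq : (0:ℝ) ≤ 1 - p := by linarith
    have h2 := mul_le_mul_of_nonneg_right hsq hq
    nlinarith [sq_nonneg p, sq_nonneg (p*p), h2, sq_nonneg (1-p)]
  rw [Real.exp_neg]
  rw [inv_le_iff_one_le_mul₀ (Real.exp_pos _)]
  linarith [hkey]

lemma exp_pow_le_one_sub_pow {p : ℝ} (h0 : 0 ≤ p) (h1 : p ≤ 1/5) (j : ℕ) :
    Real.exp (-((j:ℝ) * (p + p^2))) ≤ (1 - p) ^ j := by
  calc Real.exp (-((j:ℝ) * (p + p^2))) = (Real.exp (-(p+p^2)))^j := by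
        rw [← Real.exp_nat_mul]; ring_nf
    _ ≤ (1-p)^j := pow_le_pow_left₀ (Real.exp_nonneg _) (exp_le_one_sub h0 h1) j

lemma geom_sum_le_inv {x : ℝ} (h0 : 0 ≤ x) (h1 : x < 1) (n : ℕ) :
    ∑ i ∈ Finset.range n, x ^ i ≤ 1 / (1 - x) := by
  rw [le_div_iff₀ (by linarith)]
  have := geom_sum_mul x n
  have hxn : 0 ≤ x ^ n := pow_nonneg h0 n
  nlinarith [this]

lemma one_div_one_sub_le {x : ℝ} (h0 : 0 ≤ x) (h1 : x ≤ 1/2) : 1 / (1 - x) ≤ 1 + 2*x := by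
  rw [div_le_iff₀ (by linarith)]
  nlinarith

lemma exp_le_one_add_two_mul {x : ℝ} (h0 : 0 ≤ x) (h1 : x ≤ 1/2) :
    Real.exp x ≤ 1 + 2*x := by
  have h : 1 - x ≤ Real.exp (-x) := by have := Real.add_one_le_exp (-x); linarith
  have h2 : Real.exp x * (1 - x) ≤ 1 := by
    have := mul_le_mul_of_nonneg_left h (Real.exp_nonneg x)
    rw [← Real.exp_add] at this
    simpa using this
  nlinarith [Real.exp_pos x, h2]

lemma pZero_eq {n k : ℕ} (p : ℝ) (hkm : k ≤ n - k) :
    pZero n k p = ∑ a ∈ Finset.range (k + 1), binP k p a * binP (n - k) p a := by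
  unfold pZero
  refine Finset.sum_congr rfl fun a ha => ?_
  rw [Finset.sum_ite_eq' (Finset.range (n - k + 1)) a (fun b => binP k p a * binP (n - k) p b)]
  have : a ∈ Finset.range (n - k + 1) := by
    rw [Finset.mem_range] at ha ⊢; omega
  simp [this]

lemma pZero_ge {n k : ℕ} {p : ℝ} (h0 : 0 ≤ p) (h1 : p ≤ 1) (hkn : k ≤ n) (hkm : k ≤ n - k) :
    (1 - p) ^ n ≤ pZero n k p := by
  rw [pZero_eq p hkm]
  have h00 : binP k p 0 * binP (n - k) p 0 = (1 - p) ^ n := by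
    rw [binP_zero, binP_zero, ← pow_add]
    congr 1
    omega
  calc (1 - p) ^ n = binP k p 0 * binP (n - k) p 0 := h00.symm
    _ ≤ _ := Finset.single_le_sum
        (fun a _ => mul_nonneg (binP_nonneg h0 h1 a) (binP_nonneg h0 h1 a))
        (Finset.mem_range.mpr (Nat.succ_pos k))

lemma pZero_le {n k : ℕ} {p : ℝ} (h0 : 0 ≤ p) (h1 : p ≤ 1) (hkn : k ≤ n) (hkm : k ≤ n - k) :
    pZero n k p ≤ (1 - p) ^ n +
      ((k : ℝ) * p * ((n : ℝ) * p)) *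
        (∑ i ∈ Finset.range k, ((k : ℝ) * p * ((n : ℝ) * p)) ^ i) * (1 - p) ^ (n - k - k) := by
  have hq : (0:ℝ) ≤ 1 - p := by linarith
  rw [pZero_eq p hkm]
  rw [Finset.sum_range_succ']
  have h00 : binP k p 0 * binP (n - k) p 0 = (1 - p) ^ n := by
    rw [binP_zero, binP_zero, ← pow_add]; congr 1; omega
  rw [h00]
  rw [add_comm]
  apply add_le_add_right
  set m := n - k with hm
  set q := 1 - p with hqdef
  set v := (k : ℝ) * p * ((n : ℝ) * p) with hv
  have hv0 : 0 ≤ v := by positivity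
  calc ∑ i ∈ Finset.range k, binP k p (i + 1) * binP m p (i + 1)
      ≤ ∑ i ∈ Finset.range k, v * v ^ i * q ^ (m - k) := by
        apply Finset.sum_le_sum
        intro i hi
        rw [Finset.mem_range] at hi
        have hb1 : binP k p (i+1) ≤ ((k:ℝ) * p) ^ (i+1) := binP_le' h0 h1 (i+1)
        have hb2 : binP m p (i+1) ≤ ((n:ℝ) * p) ^ (i+1) * q ^ (m - k) := by
          calc binP m p (i+1) ≤ ((m:ℝ) * p) ^ (i+1) * q ^ (m - (i+1)) := binP_le h0 h1 (i+1)
            _ ≤ ((n:ℝ) * p) ^ (i+1) * q ^ (m - k) := by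
                apply mul_le_mul
                · apply pow_le_pow_left₀ (by positivity)
                  apply mul_le_mul_of_nonneg_right _ h0
                  exact_mod_cast Nat.cast_le.mpr (Nat.sub_le n k)
                · exact pow_le_pow_of_le_one hq (by linarith) (by omega)
                · exact pow_nonneg hq _
                · positivity
        calc binP k p (i+1) * binP m p (i+1)
            ≤ ((k:ℝ) * p) ^ (i+1) * (((n:ℝ) * p) ^ (i+1) * q ^ (m - k)) := by
              apply mul_le_mul hb1 hb2 (binP_nonneg h0 h1 _) (by positivity)
          _ = v * v ^ i * q ^ (m - k) := by
              rw [hv, mul_pow, pow_succ, pow_succ]; ring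
    _ = v * (∑ i ∈ Finset.range k, v ^ i) * q ^ (m - k) := by
        rw [Finset.mul_sum, Finset.sum_mul]


lemma pMinus_ge {n k : ℕ} {p : ℝ} (h0 : 0 ≤ p) (h1 : p ≤ 1) (hk : 1 ≤ k) :
    (k:ℝ) * p * (1-p)^(k-1) * (1-p)^(n-k) ≤ pMinus n k p := by
  unfold pMinus
  have hterm : ∀ a b : ℕ, 0 ≤ (if b < a then binP k p a * binP (n-k) p b else 0) := by
    intro a b
    split
    · exact mul_nonneg (binP_nonneg h0 h1 _) (binP_nonneg h0 h1 _)
    · exact le_refl 0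
  have h1mem : 1 ∈ Finset.range (k+1) := Finset.mem_range.mpr (by omega)
  have h0mem : 0 ∈ Finset.range (n-k+1) := Finset.mem_range.mpr (by omega)
  have inner : binP k p 1 * binP (n-k) p 0 ≤
      ∑ b ∈ Finset.range (n-k+1), if b < 1 then binP k p 1 * binP (n-k) p b else 0 := by
    have := Finset.single_le_sum (f := fun b => if b < 1 then binP k p 1 * binP (n-k) p b else 0)
      (fun b _ => hterm 1 b) h0mem
    simpa using this
  have outer : (∑ b ∈ Finset.range (n-k+1), if b < 1 then binP k p 1 * binP (n-k) p b else 0) ≤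
      ∑ a ∈ Finset.range (k+1), ∑ b ∈ Finset.range (n-k+1),
        if b < a then binP k p a * binP (n-k) p b else 0 := by
    exact Finset.single_le_sum
      (f := fun a => ∑ b ∈ Finset.range (n-k+1), if b < a then binP k p a * binP (n-k) p b else 0)
      (fun a _ => Finset.sum_nonneg fun b _ => hterm a b) h1mem
  have := le_trans inner outer
  rw [binP_one, binP_zero] at this
  exact this

lemma pMinus_le {n k : ℕ} {p r : ℝ} (h0 : 0 ≤ p) (h1 : p ≤ 1) (hkm : k ≤ n - k)
    (hr : 0 ≤ r) (hnp : (n:ℝ)*p ≤ r) :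
    pMinus n k p ≤ (k:ℝ)*p * (∑ i ∈ Finset.range k, (2*((k:ℝ)*p*(1+r)))^i) * (1-p)^(n-k-k) := by
  have hq : (0:ℝ) ≤ 1 - p := by linarith
  set m := n - k with hm
  unfold pMinus
  rw [Finset.sum_range_succ']
  have hzero : (∑ b ∈ Finset.range (m+1), if b < 0 then binP k p 0 * binP m p b else 0) = 0 := by
    simp
  rw [hzero, add_zero]
  have key : ∀ i ∈ Finset.range k,
      (∑ b ∈ Finset.range (m+1), if b < i+1 then binP k p (i+1) * binP m p b else 0) ≤
      (k:ℝ)*p * (2*((k:ℝ)*p*(1+r)))^i * (1-p)^(m-k) := by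
    intro i hi
    rw [Finset.mem_range] at hi
    set B := ((k:ℝ)*p)^(i+1) * (1+r)^i * (1-p)^(m-k) with hB
    have hB0 : 0 ≤ B := by positivity
    have step1 : (∑ b ∈ Finset.range (m+1), if b < i+1 then binP k p (i+1) * binP m p b else 0) ≤
        ∑ b ∈ Finset.range (m+1), (if b < i+1 then B else 0) := by
      apply Finset.sum_le_sum
      intro b _
      split
      · next hb =>
        have hb1 : binP k p (i+1) ≤ ((k:ℝ) * p) ^ (i+1) := binP_le' h0 h1 (i+1)
        have hb2 : binP m p b ≤ (1+r)^i * (1-p)^(m-k) := by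
          calc binP m p b ≤ ((m:ℝ) * p) ^ b * (1-p) ^ (m - b) := binP_le h0 h1 b
            _ ≤ (1+r)^i * (1-p)^(m-k) := by
                apply mul_le_mul
                · calc ((m:ℝ) * p) ^ b ≤ r ^ b := by
                        apply pow_le_pow_left₀ (by positivity)
                        calc (m:ℝ) * p ≤ (n:ℝ) * p := by
                              apply mul_le_mul_of_nonneg_right _ h0
                              exact_mod_cast Nat.cast_le.mpr (Nat.sub_le n k)
                          _ ≤ r := hnp
                    _ ≤ (1+r) ^ b := pow_le_pow_left₀ hr (by linarith) b
                    _ ≤ (1+r) ^ i := pow_le_pow_right₀ (by linarith) (by omega)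
                · exact pow_le_pow_of_le_one hq (by linarith) (by omega)
                · exact pow_nonneg hq _
                · positivity
        calc binP k p (i+1) * binP m p b ≤ ((k:ℝ)*p)^(i+1) * ((1+r)^i * (1-p)^(m-k)) :=
              mul_le_mul hb1 hb2 (binP_nonneg h0 h1 _) (by positivity)
          _ = B := by rw [hB]; ring
      · exact le_refl 0
    have step2 : (∑ b ∈ Finset.range (m+1), if b < i+1 then B else 0) ≤ ((i:ℝ)+1) * B := by
      rw [← Finset.sum_filter]
      rw [Finset.sum_const, nsmul_eq_mul]
      apply mul_le_mul_of_nonneg_right _ hB0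
      have hsub : (Finset.range (m+1)).filter (fun b => b < i+1) ⊆ Finset.range (i+1) := by
        intro x hx
        simp only [Finset.mem_filter, Finset.mem_range] at hx ⊢
        omega
      have := Finset.card_le_card hsub
      rw [Finset.card_range] at this
      exact_mod_cast Nat.cast_le.mpr this
    have step3 : ((i:ℝ)+1) * B ≤ (k:ℝ)*p * (2*((k:ℝ)*p*(1+r)))^i * (1-p)^(m-k) := by
      have h2p : ((i:ℝ)+1) ≤ 2^i := by
        exact_mod_cast Nat.cast_le.mpr (Nat.lt_two_pow_self (n := i))
      have hmid : ((i:ℝ)+1) * ((k:ℝ)*p*(1+r))^i ≤ (2*((k:ℝ)*p*(1+r)))^i := by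
        have hmp : (2*((k:ℝ)*p*(1+r)))^i = 2^i * ((k:ℝ)*p*(1+r))^i := mul_pow 2 _ i
        rw [hmp]
        exact mul_le_mul_of_nonneg_right h2p (by positivity)
      calc ((i:ℝ)+1) * B = ((k:ℝ)*p) * (((i:ℝ)+1) * ((k:ℝ)*p*(1+r))^i) * (1-p)^(m-k) := by
            rw [hB, pow_succ, mul_pow ((k:ℝ)*p) (1+r) i]; ring
        _ ≤ ((k:ℝ)*p) * (2*((k:ℝ)*p*(1+r)))^i * (1-p)^(m-k) := by
            apply mul_le_mul_of_nonneg_right _ (pow_nonneg hq _)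
            exact mul_le_mul_of_nonneg_left hmid (by positivity)
    exact le_trans step1 (le_trans step2 step3)
  calc (∑ i ∈ Finset.range k, ∑ b ∈ Finset.range (m+1),
        if b < i+1 then binP k p (i+1) * binP m p b else 0)
      ≤ ∑ i ∈ Finset.range k, (k:ℝ)*p * (2*((k:ℝ)*p*(1+r)))^i * (1-p)^(m-k) :=
        Finset.sum_le_sum key
    _ = (k:ℝ)*p * (∑ i ∈ Finset.range k, (2*((k:ℝ)*p*(1+r)))^i) * (1-p)^(m-k) := by
        rw [Finset.mul_sum, Finset.sum_mul]



set_option maxHeartbeats 2000000 in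
/-- For every `c > 0` and `ε > 0` there are `C, δ, n0 > 0` such
that for all `n ≥ n0`, all `λ` with `C ln n ≤ λ ≤ n^c`, all `k` with
`0 < k ≤ 3n/λ` and all `r` with `0 < r ≤ δ·λ^{1/4}`, with `p = r/n`:
`(1−ε)(kr/n)e^{−r} < p_-(r) < (1+ε)(kr/n)e^{−r}`,
`(1−ε)e^{−r} < p_0(r) < (1+ε)e^{−r}`, and `(1−ε)e^{−r} < p'(r) < (1+ε)e^{−r}`. -/
theorem progress_probabilities_near_region :
    ∀ c : ℝ, 0 < c → ∀ ε : ℝ, 0 < ε →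
      ∃ C δ n0 : ℝ, 0 < C ∧ 0 < δ ∧ 0 < n0 ∧
        ∀ n lam k : ℕ, n0 ≤ (n : ℝ) →
          C * Real.log n ≤ (lam : ℝ) → (lam : ℝ) ≤ (n : ℝ) ^ c →
          0 < k → (k : ℝ) ≤ 3 * n / lam →
          ∀ r : ℝ, 0 < r → r ≤ δ * (lam : ℝ) ^ ((1 : ℝ) / 4) →
            ((1 - ε) * ((k : ℝ) * r / n) * Real.exp (-r) < pMinus n k (r / n) ∧
              pMinus n k (r / n) < (1 + ε) * ((k : ℝ) * r / n) * Real.exp (-r)) ∧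
            ((1 - ε) * Real.exp (-r) < pZero n k (r / n) ∧
              pZero n k (r / n) < (1 + ε) * Real.exp (-r)) ∧
            ((1 - ε) * Real.exp (-r) < pPrime n k (r / n) ∧
              pPrime n k (r / n) < (1 + ε) * Real.exp (-r)) := by
  intro c hc ε hε
  set t : ℝ := min ε 1 / 16 with htdef
  have ht0 : 0 < t := by have := lt_min hε one_pos; positivity
  have ht16e : 16 * t ≤ ε := by
    have := min_le_left ε 1; rw [htdef]; linarith
  have ht161 : 16 * t ≤ 1 := by
    have := min_le_right ε 1; rw [htdef]; linarith
  set δ : ℝ := Real.sqrt t / 2 with hδdef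
  have hδ0 : 0 < δ := by have := Real.sqrt_pos.mpr ht0; positivity
  have hδsq : δ ^ 2 = t / 4 := by
    rw [hδdef, div_pow, Real.sq_sqrt ht0.le]; norm_num
  have hδ1 : δ ≤ 1 / 2 := by
    have h1 : Real.sqrt t ≤ 1 := by
      rw [show (1:ℝ) = Real.sqrt 1 by simp]
      exact Real.sqrt_le_sqrt (by linarith)
    rw [hδdef]; linarith
  set C : ℝ := 9 / (4 * t) with hCdef
  have hC0 : 0 < C := by positivity
  set n0 : ℝ := Real.exp 6 + 4 / t ^ 2 with hn0def
  have hn00 : 0 < n0 := by positivity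
  refine ⟨C, δ, n0, hC0, hδ0, hn00, ?_⟩
  intro n lam k hn hlamlog hlamup hk hk3 r hr hrle
  -- basic facts about n
  have hexp6 : Real.exp 6 ≤ (n:ℝ) := by
    have : (0:ℝ) < 4 / t ^ 2 := by positivity
    rw [hn0def] at hn; linarith
  have hnpos : (0:ℝ) < n := lt_of_lt_of_le (Real.exp_pos 6) hexp6
  have hn4t : 4 / t ^ 2 ≤ (n:ℝ) := by
    have : (0:ℝ) < Real.exp 6 := Real.exp_pos 6
    rw [hn0def] at hn; linarith
  have hlog6 : (6:ℝ) ≤ Real.log n := by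
    have := Real.log_le_log (Real.exp_pos 6) hexp6
    rwa [Real.log_exp] at this
  have hC1 : (1:ℝ) ≤ C := by
    rw [hCdef, le_div_iff₀ (by positivity)]; linarith
  have hlam6 : (6:ℝ) ≤ (lam:ℝ) := by
    calc (6:ℝ) = 1 * 6 := by ring
      _ ≤ C * Real.log n := mul_le_mul hC1 hlog6 (by norm_num) hC0.le
      _ ≤ (lam:ℝ) := hlamlog
  have hlam0 : (0:ℝ) < (lam:ℝ) := by linarith
  have hlam1 : (1:ℝ) ≤ (lam:ℝ) := by linarith
  have hk1 : (1:ℝ) ≤ (k:ℝ) := by exact_mod_cast hk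
  have hklam : (k:ℝ) * lam ≤ 3 * n := by
    rw [← le_div_iff₀ hlam0]; exact hk3
  have hk2R : 2 * (k:ℝ) ≤ (n:ℝ) := by
    have h6k : 6 * (k:ℝ) ≤ (k:ℝ) * lam := by
      have := mul_le_mul_of_nonneg_left hlam6 (by linarith : (0:ℝ) ≤ (k:ℝ))
      linarith
    linarith [hklam]
  have hk2n : 2 * k ≤ n := by exact_mod_cast (by push_cast; linarith : ((2*k:ℕ):ℝ) ≤ (n:ℝ))
  have hkn : k ≤ n := by omega
  have hkm : k ≤ n - k := by omega
  have hlam3n : (lam:ℝ) ≤ 3 * n := by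
    have : 1 * (lam:ℝ) ≤ (k:ℝ) * lam := mul_le_mul_of_nonneg_right hk1 hlam0.le
    linarith [hklam]
  -- p
  set p : ℝ := r / n with hpdef
  have hp0 : 0 < p := div_pos hr hnpos
  have hrnp : (n:ℝ) * p = r := by rw [hpdef]; field_simp
  -- rpow facts
  have hl14nn : 0 ≤ (lam:ℝ) ^ ((1:ℝ)/4) := Real.rpow_nonneg hlam0.le _
  have hsqrt4 : Real.sqrt 4 = 2 := by
    rw [show (4:ℝ) = 2^2 by norm_num, Real.sqrt_sq (by norm_num : (0:ℝ) ≤ 2)]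
  have hsq3n : Real.sqrt (3*(n:ℝ)) ≤ 2 * Real.sqrt n := by
    calc Real.sqrt (3*(n:ℝ)) ≤ Real.sqrt (4*(n:ℝ)) := Real.sqrt_le_sqrt (by linarith)
      _ = 2 * Real.sqrt n := by rw [Real.sqrt_mul (by norm_num : (0:ℝ) ≤ 4), hsqrt4]
  have hl14_le : (lam:ℝ) ^ ((1:ℝ)/4) ≤ 2 * Real.sqrt n := by
    calc (lam:ℝ) ^ ((1:ℝ)/4) ≤ (3*(n:ℝ)) ^ ((1:ℝ)/4) :=
          Real.rpow_le_rpow hlam0.le hlam3n (by norm_num)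
      _ ≤ (3*(n:ℝ)) ^ ((1:ℝ)/2) := by
          apply Real.rpow_le_rpow_of_exponent_le (by linarith) (by norm_num)
      _ = Real.sqrt (3*(n:ℝ)) := by rw [Real.sqrt_eq_rpow]
      _ ≤ 2 * Real.sqrt n := hsq3n
  have hr2 : r ≤ 2 * δ * Real.sqrt n := by
    calc r ≤ δ * ((lam:ℝ) ^ ((1:ℝ)/4)) := hrle
      _ ≤ δ * (2 * Real.sqrt n) := mul_le_mul_of_nonneg_left hl14_le hδ0.le
      _ = 2 * δ * Real.sqrt n := by ring
  have hsqn : Real.sqrt n * Real.sqrt n = (n:ℝ) := Real.mul_self_sqrt hnpos.le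
  have hsn2t : 2 / t ≤ Real.sqrt n := by
    have h1 : Real.sqrt (4 / t^2) = 2 / t := by
      rw [show (4:ℝ)/t^2 = (2/t)^2 by ring, Real.sqrt_sq (by positivity)]
    rw [← h1]; exact Real.sqrt_le_sqrt hn4t
  have htn : 2 ≤ t * Real.sqrt n := by
    rw [div_le_iff₀ ht0] at hsn2t; linarith
  -- smallness facts
  set u : ℝ := (k:ℝ) * p with hudef
  have hu0 : 0 < u := by positivity
  have hulam : u * lam ≤ 3 * r := by
    have h1 := mul_le_mul_of_nonneg_right hklam hp0.le
    calc u * lam = ((k:ℝ) * lam) * p := by rw [hudef]; ring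
      _ ≤ (3 * n) * p := h1
      _ = 3 * r := by rw [mul_assoc, hrnp]
  have hsplit : (lam:ℝ) ^ ((3:ℝ)/4) * (lam:ℝ) ^ ((1:ℝ)/4) = (lam:ℝ) := by
    rw [← Real.rpow_add hlam0]; norm_num
  have h34 : 3 * δ / t ≤ (lam:ℝ) ^ ((3:ℝ)/4) := by
    have h9 : (3 * δ / t) ^ 2 ≤ C := by
      have he : (3 * δ / t) ^ 2 = 9 * δ^2 / t^2 := by ring
      have he2 : 9 * δ^2 / t^2 = 9 / (4*t) := by
        rw [hδsq]; field_simp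
      rw [he, he2, hCdef]
    have hCl : C ≤ (lam:ℝ) := by
      calc C = C * 1 := by ring
        _ ≤ C * Real.log n := mul_le_mul_of_nonneg_left (by linarith) hC0.le
        _ ≤ (lam:ℝ) := hlamlog
    calc 3 * δ / t ≤ Real.sqrt C := Real.le_sqrt_of_sq_le h9
      _ ≤ Real.sqrt lam := Real.sqrt_le_sqrt hCl
      _ = (lam:ℝ) ^ ((1:ℝ)/2) := Real.sqrt_eq_rpow _
      _ ≤ (lam:ℝ) ^ ((3:ℝ)/4) := Real.rpow_le_rpow_of_exponent_le hlam1 (by norm_num)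
  have hut : u ≤ t := by
    have h1 : u * lam ≤ 3 * (δ * (lam:ℝ) ^ ((1:ℝ)/4)) := by
      have := mul_le_mul_of_nonneg_left hrle (by norm_num : (0:ℝ) ≤ 3)
      linarith
    have h2 : 3 * (δ * (lam:ℝ) ^ ((1:ℝ)/4)) ≤ t * lam := by
      have h3 : 3 * δ ≤ t * (lam:ℝ) ^ ((3:ℝ)/4) := by
        have := mul_le_mul_of_nonneg_left h34 ht0.le
        calc 3 * δ = t * (3 * δ / t) := by field_simp
          _ ≤ t * (lam:ℝ) ^ ((3:ℝ)/4) := this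
      calc 3 * (δ * (lam:ℝ) ^ ((1:ℝ)/4)) = (3 * δ) * (lam:ℝ) ^ ((1:ℝ)/4) := by ring
        _ ≤ (t * (lam:ℝ) ^ ((3:ℝ)/4)) * (lam:ℝ) ^ ((1:ℝ)/4) :=
            mul_le_mul_of_nonneg_right h3 hl14nn
        _ = t * lam := by rw [mul_assoc, hsplit]
    have := le_trans h1 h2
    exact le_of_mul_le_mul_right (by linarith) hlam0
  set v : ℝ := u * r with hvdef
  have hv0 : 0 < v := by positivity
  have hvt : v ≤ t := by
    have hrsq : r^2 ≤ δ^2 * (lam:ℝ) ^ ((1:ℝ)/2) := by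
      have h1 : r^2 ≤ (δ * (lam:ℝ) ^ ((1:ℝ)/4))^2 := pow_le_pow_left₀ hr.le hrle 2
      have h2 : ((lam:ℝ) ^ ((1:ℝ)/4))^2 = (lam:ℝ) ^ ((1:ℝ)/2) := by
        rw [← Real.rpow_natCast ((lam:ℝ) ^ ((1:ℝ)/4)) 2, ← Real.rpow_mul hlam0.le]
        norm_num
      calc r^2 ≤ (δ * (lam:ℝ) ^ ((1:ℝ)/4))^2 := h1
        _ = δ^2 * ((lam:ℝ) ^ ((1:ℝ)/4))^2 := by ring
        _ = δ^2 * (lam:ℝ) ^ ((1:ℝ)/2) := by rw [h2]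
    have h12lam : (lam:ℝ) ^ ((1:ℝ)/2) ≤ (lam:ℝ) := by
      calc (lam:ℝ) ^ ((1:ℝ)/2) ≤ (lam:ℝ) ^ ((1:ℝ)) :=
            Real.rpow_le_rpow_of_exponent_le hlam1 (by norm_num)
        _ = (lam:ℝ) := Real.rpow_one _
    have hvl : v * lam ≤ t * lam := by
      calc v * lam = (u * lam) * r := by rw [hvdef]; ring
        _ ≤ (3 * r) * r := mul_le_mul_of_nonneg_right hulam hr.le
        _ = 3 * r^2 := by ring
        _ ≤ 3 * (δ^2 * (lam:ℝ)) := by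
            have := mul_le_mul_of_nonneg_left h12lam (sq_nonneg δ)
            linarith [hrsq]
        _ = (3 * δ^2) * lam := by ring
        _ ≤ t * lam := by
            apply mul_le_mul_of_nonneg_right _ hlam0.le
            rw [hδsq]; linarith
    exact le_of_mul_le_mul_right (by linarith) hlam0
  set w : ℝ := r * p with hwdef
  have hw0 : 0 < w := by positivity
  have hwt : w ≤ t := by
    rw [hwdef, hpdef, mul_div_assoc', div_le_iff₀ hnpos]
    have h1 : r * r ≤ (2 * δ * Real.sqrt n) * (2 * δ * Real.sqrt n) :=
      mul_le_mul hr2 hr2 hr.le (by positivity)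
    calc r * r ≤ 4 * δ^2 * (Real.sqrt n * Real.sqrt n) := by linarith [h1, sq_nonneg (Real.sqrt n)]
      _ = 4 * (t/4) * (n:ℝ) := by rw [hδsq, hsqn]
      _ = t * n := by ring
  have hpt : p ≤ δ * t := by
    rw [hpdef, div_le_iff₀ hnpos]
    have h2 : 2 * Real.sqrt n ≤ t * (Real.sqrt n * Real.sqrt n) := by
      have := mul_le_mul_of_nonneg_right htn (Real.sqrt_nonneg (n:ℝ))
      linarith
    have h3 : δ * (2 * Real.sqrt n) ≤ δ * (t * (n:ℝ)) := by
      apply mul_le_mul_of_nonneg_left _ hδ0.le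
      have h4 : t * (Real.sqrt n * Real.sqrt n) = t * (n:ℝ) := by rw [hsqn]
      linarith
    calc r ≤ 2 * δ * Real.sqrt n := hr2
      _ = δ * (2 * Real.sqrt n) := by ring
      _ ≤ δ * (t * n) := h3
      _ = δ * t * n := by ring
  have hp5 : p ≤ 1/5 := by
    have : δ * t ≤ (1/2) * t := mul_le_mul_of_nonneg_right hδ1 ht0.le
    linarith
  have hp1 : p ≤ 1 := by linarith
  have hq0 : (0:ℝ) ≤ 1 - p := by linarith
  have hE0 : 0 < Real.exp (-r) := Real.exp_pos _
  -- exponential bounds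
  have hqn_up : (1-p)^n ≤ Real.exp (-r) := by
    have := pow_one_sub_le_exp hp1 n
    rwa [hrnp] at this
  have hcast_nk : ((n-k:ℕ):ℝ) * p = r - u := by
    rw [Nat.cast_sub hkn, sub_mul, hrnp, hudef]
  have hcast_n2k : ((n-k-k:ℕ):ℝ) * p = r - 2*u := by
    have he : n - k - k = n - 2*k := by omega
    rw [he, Nat.cast_sub hk2n]
    push_cast
    rw [sub_mul, hrnp, hudef]; ring
  have hqm_up : (1-p)^(n-k) ≤ Real.exp (-r) * Real.exp u := by
    calc (1-p)^(n-k) ≤ Real.exp (-(((n-k:ℕ):ℝ) * p)) := pow_one_sub_le_exp hp1 _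
      _ = Real.exp (-r) * Real.exp u := by rw [hcast_nk, ← Real.exp_add]; ring_nf
  have hqmk_up : (1-p)^(n-k-k) ≤ Real.exp (-r) * Real.exp (2*u) := by
    calc (1-p)^(n-k-k) ≤ Real.exp (-(((n-k-k:ℕ):ℝ) * p)) := pow_one_sub_le_exp hp1 _
      _ = Real.exp (-r) * Real.exp (2*u) := by rw [hcast_n2k, ← Real.exp_add]; ring_nf
  have hqn_lo : Real.exp (-r) * Real.exp (-w) ≤ (1-p)^n := by
    have h1 := exp_pow_le_one_sub_pow hp0.le hp5 n
    have h2 : (n:ℝ) * (p + p^2) = r + w := by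
      rw [hwdef, ← hrnp]; ring
    rw [h2] at h1
    calc Real.exp (-r) * Real.exp (-w) = Real.exp (-(r+w)) := by
          rw [← Real.exp_add]; ring_nf
      _ ≤ (1-p)^n := h1
  have hexpw : 1 - ε < Real.exp (-w) := by
    have h1 : 1 - w ≤ Real.exp (-w) := by have := Real.add_one_le_exp (-w); linarith
    have : w < ε := by linarith
    linarith
  have hexpu_lt : Real.exp u < 1 + ε := by
    have h1 : Real.exp u ≤ 1 + 2*u := exp_le_one_add_two_mul hu0.le (by linarith)
    linarith
  -- ### pPrime bounds
  have hPrime : (1 - ε) * Real.exp (-r) < pPrime n k (r/n) ∧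
      pPrime n k (r/n) < (1 + ε) * Real.exp (-r) := by
    have heq : pPrime n k (r/n) = (1-p)^(n-k) := by
      rw [pPrime, ← hpdef, binP_zero]
    constructor
    · rw [heq]
      have h1 : (1-p)^n ≤ (1-p)^(n-k) :=
        pow_le_pow_of_le_one hq0 (by linarith) (Nat.sub_le n k)
      have h2 : (1 - ε) * Real.exp (-r) < Real.exp (-r) * Real.exp (-w) := by
        have := mul_lt_mul_of_pos_left hexpw hE0
        linarith [this]
      linarith [hqn_lo]
    · rw [heq]
      calc (1-p)^(n-k) ≤ Real.exp (-r) * Real.exp u := hqm_up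
        _ < Real.exp (-r) * (1 + ε) := mul_lt_mul_of_pos_left hexpu_lt hE0
        _ = (1 + ε) * Real.exp (-r) := by ring
  -- ### pZero bounds
  have hZero : (1 - ε) * Real.exp (-r) < pZero n k (r/n) ∧
      pZero n k (r/n) < (1 + ε) * Real.exp (-r) := by
    constructor
    · have h1 : (1-p)^n ≤ pZero n k (r/n) := by
        rw [← hpdef]; exact pZero_ge hp0.le hp1 hkn hkm
      have h2 : (1 - ε) * Real.exp (-r) < Real.exp (-r) * Real.exp (-w) := by
        have := mul_lt_mul_of_pos_left hexpw hE0
        linarith [this]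
      linarith [hqn_lo]
    · have h1 : pZero n k (r/n) ≤ (1-p)^n +
          ((k:ℝ)*p*((n:ℝ)*p)) * (∑ i ∈ Finset.range k, ((k:ℝ)*p*((n:ℝ)*p))^i) * (1-p)^(n-k-k) := by
        rw [← hpdef]; exact pZero_le hp0.le hp1 hkn hkm
      have hkpnp : (k:ℝ)*p*((n:ℝ)*p) = v := by rw [hvdef, hudef, hrnp]
      rw [hkpnp] at h1
      have hgeom : (∑ i ∈ Finset.range k, v^i) ≤ 1 + 2*v := by
        calc (∑ i ∈ Finset.range k, v^i) ≤ 1/(1-v) := geom_sum_le_inv hv0.le (by linarith) k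
          _ ≤ 1 + 2*v := one_div_one_sub_le hv0.le (by linarith)
      have hexp2u : Real.exp (2*u) ≤ 1 + 4*u := by
        have := exp_le_one_add_two_mul (x := 2*u) (by linarith) (by linarith)
        linarith
      have hQ : (1-p)^(n-k-k) ≤ Real.exp (-r) * (1 + 4*u) := by
        calc (1-p)^(n-k-k) ≤ Real.exp (-r) * Real.exp (2*u) := hqmk_up
          _ ≤ Real.exp (-r) * (1 + 4*u) := mul_le_mul_of_nonneg_left hexp2u hE0.le
      have hsum0 : 0 ≤ (∑ i ∈ Finset.range k, v^i) :=
        Finset.sum_nonneg fun i _ => pow_nonneg hv0.le i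
      have h2 : v * (∑ i ∈ Finset.range k, v^i) * (1-p)^(n-k-k) ≤
          v * (1 + 2*v) * (Real.exp (-r) * (1 + 4*u)) := by
        apply mul_le_mul
        · exact mul_le_mul_of_nonneg_left hgeom hv0.le
        · exact hQ
        · exact pow_nonneg hq0 _
        · positivity
      have h3 : v * (1 + 2*v) * (Real.exp (-r) * (1 + 4*u)) < ε * Real.exp (-r) := by
        have hnum : v * (1 + 2*v) * (1 + 4*u) < ε := by
          have hb1 : (1:ℝ) + 2*v ≤ 9/8 := by linarith
          have hb2 : (1:ℝ) + 4*u ≤ 5/4 := by linarith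
          have hmm : v * (1 + 2*v) * (1 + 4*u) ≤ v * (9/8) * (5/4) :=
            mul_le_mul (mul_le_mul_of_nonneg_left hb1 hv0.le) hb2 (by linarith) (by positivity)
          linarith
        calc v * (1 + 2*v) * (Real.exp (-r) * (1 + 4*u))
            = (v * (1 + 2*v) * (1 + 4*u)) * Real.exp (-r) := by ring
          _ < ε * Real.exp (-r) := mul_lt_mul_of_pos_right hnum hE0
      calc pZero n k (r/n) ≤ (1-p)^n + v * (∑ i ∈ Finset.range k, v^i) * (1-p)^(n-k-k) := h1
        _ ≤ Real.exp (-r) + v * (1 + 2*v) * (Real.exp (-r) * (1 + 4*u)) := by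
            linarith [hqn_up, h2]
        _ < Real.exp (-r) + ε * Real.exp (-r) := by linarith
        _ = (1 + ε) * Real.exp (-r) := by ring
  -- ### pMinus bounds
  have hueq : (k:ℝ) * r / n = u := by rw [hudef, hpdef]; ring
  have hMinus : (1 - ε) * ((k:ℝ) * r / n) * Real.exp (-r) < pMinus n k (r/n) ∧
      pMinus n k (r/n) < (1 + ε) * ((k:ℝ) * r / n) * Real.exp (-r) := by
    rw [hueq]
    constructor
    · have h1 : (k:ℝ)*p*(1-p)^(k-1)*(1-p)^(n-k) ≤ pMinus n k (r/n) := by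
        rw [← hpdef]; exact pMinus_ge hp0.le hp1 hk
      have h2 : (1-p)^(k-1)*(1-p)^(n-k) = (1-p)^(n-1) := by
        rw [← pow_add]; congr 1; omega
      have h3 : (1-p)^n ≤ (1-p)^(n-1) :=
        pow_le_pow_of_le_one hq0 (by linarith) (Nat.sub_le n 1)
      have h4 : Real.exp (-r) * Real.exp (-w) ≤ (1-p)^(n-1) := le_trans hqn_lo h3
      have h5 : (1 - ε) * Real.exp (-r) < Real.exp (-r) * Real.exp (-w) := by
        have := mul_lt_mul_of_pos_left hexpw hE0
        linarith [this]
      have h6 : u * ((1 - ε) * Real.exp (-r)) < u * (1-p)^(n-1) := by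
        apply lt_of_lt_of_le (mul_lt_mul_of_pos_left h5 hu0)
        exact mul_le_mul_of_nonneg_left h4 hu0.le
      calc (1 - ε) * u * Real.exp (-r) = u * ((1 - ε) * Real.exp (-r)) := by ring
        _ < u * (1-p)^(n-1) := h6
        _ = (k:ℝ)*p*((1-p)^(k-1)*(1-p)^(n-k)) := by rw [h2, hudef]
        _ = (k:ℝ)*p*(1-p)^(k-1)*(1-p)^(n-k) := by ring
        _ ≤ pMinus n k (r/n) := h1
    · have h1 : pMinus n k (r/n) ≤
          (k:ℝ)*p * (∑ i ∈ Finset.range k, (2*((k:ℝ)*p*(1+r)))^i) * (1-p)^(n-k-k) := by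
        rw [← hpdef]
        exact pMinus_le hp0.le hp1 hkm hr.le (le_of_eq hrnp)
      set s : ℝ := 2*((k:ℝ)*p*(1+r)) with hsdef
      have hs_eq : s = 2*u + 2*v := by rw [hsdef, hudef, hvdef]; ring
      have hs0 : 0 < s := by rw [hs_eq]; linarith
      have hs12 : s ≤ 1/2 := by rw [hs_eq]; linarith
      have hgeom : (∑ i ∈ Finset.range k, s^i) ≤ 1 + 2*s := by
        calc (∑ i ∈ Finset.range k, s^i) ≤ 1/(1-s) := geom_sum_le_inv hs0.le (by linarith) k
          _ ≤ 1 + 2*s := one_div_one_sub_le hs0.le hs12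
      have hexp2u : Real.exp (2*u) ≤ 1 + 4*u := by
        have := exp_le_one_add_two_mul (x := 2*u) (by linarith) (by linarith)
        linarith
      have hQ : (1-p)^(n-k-k) ≤ Real.exp (-r) * (1 + 4*u) := by
        calc (1-p)^(n-k-k) ≤ Real.exp (-r) * Real.exp (2*u) := hqmk_up
          _ ≤ Real.exp (-r) * (1 + 4*u) := mul_le_mul_of_nonneg_left hexp2u hE0.le
      have hsum0 : 0 ≤ (∑ i ∈ Finset.range k, s^i) :=
        Finset.sum_nonneg fun i _ => pow_nonneg hs0.le i
      have h2 : (k:ℝ)*p * (∑ i ∈ Finset.range k, s^i) * (1-p)^(n-k-k) ≤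
          u * (1 + 2*s) * (Real.exp (-r) * (1 + 4*u)) := by
        rw [← hudef]
        apply mul_le_mul
        · exact mul_le_mul_of_nonneg_left hgeom hu0.le
        · exact hQ
        · exact pow_nonneg hq0 _
        · positivity
      have h3 : u * (1 + 2*s) * (Real.exp (-r) * (1 + 4*u)) <
          (1 + ε) * u * Real.exp (-r) := by
        have hfac : (1 + 2*s) * (1 + 4*u) < 1 + ε := by
          have ht2 : t * t ≤ (1/16) * t := mul_le_mul_of_nonneg_right (by linarith) ht0.le
          calc (1 + 2*s) * (1 + 4*u) ≤ (1 + 8*t) * (1 + 4*t) := by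
                apply mul_le_mul _ (by linarith) (by linarith) (by linarith)
                rw [hs_eq]; linarith
            _ = 1 + 12*t + 32*(t*t) := by ring
            _ < 1 + ε := by linarith
        have h4 : u * ((1 + 2*s) * (1 + 4*u)) * Real.exp (-r) <
            u * (1 + ε) * Real.exp (-r) := by
          apply mul_lt_mul_of_pos_right _ hE0
          exact mul_lt_mul_of_pos_left hfac hu0
        calc u * (1 + 2*s) * (Real.exp (-r) * (1 + 4*u))
            = u * ((1 + 2*s) * (1 + 4*u)) * Real.exp (-r) := by ring
          _ < u * (1 + ε) * Real.exp (-r) := h4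
          _ = (1 + ε) * u * Real.exp (-r) := by ring
      calc pMinus n k (r/n) ≤ (k:ℝ)*p * (∑ i ∈ Finset.range k, s^i) * (1-p)^(n-k-k) := h1
        _ ≤ u * (1 + 2*s) * (Real.exp (-r) * (1 + 4*u)) := h2
        _ < (1 + ε) * u * Real.exp (-r) := h3
  exact ⟨hMinus, hZero, hPrime⟩

end BinomialEstimates
end

section
/- Consider a stochastic process (X_t)_{t≥0} on ℝ adapted to a filtration (F_t) such that for some p ≤ 1/25 the transition probabilities satisfy, for all t ≥ 0: Pr(X_{t+1} ≥ X_t + a | F_t) ≤ p^{a+1} on the event {X_t > 1} for all a ≥ −1/2, and Pr(X_{t+1} ≥ a + 1 | F_t) ≤ p^{a+1} on the event {X_t ≤ 1} for all a ≥ 0. If X_0 ≤ 1, then for all t ≥ 1 and all k > 1 it holds that Pr(X_t ≥ 1 + k) ≤ 11·(e·p)^k. -/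
open MeasureTheory
open scoped ENNReal

lemma geom_aux {r : ℝ} (h0 : 0 ≤ r) (h1 : r < 1) (n : ℕ) :
    ∑ i ∈ Finset.range n, r ^ i ≤ (1 - r)⁻¹ := by
  rw [geom_sum_eq (by linarith : r ≠ 1) n]
  rw [div_le_iff_of_neg (by linarith : r - 1 < 0)]
  have h2 : (1 - r)⁻¹ * (r - 1) = -1 := by
    rw [inv_mul_eq_div, div_eq_iff (by linarith : (1:ℝ) - r ≠ 0)]; ring
  have : 0 ≤ r ^ n := pow_nonneg h0 n
  linarith

lemma key_real (p : ℝ) (hp0 : 0 < p) (hp : p ≤ 1/25) (a : ℝ) (ha : 0 ≤ a) (J : ℕ)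
    (hJ2 : 2*a ≤ (J:ℝ)) :
    p ^ (a+1) + 11*(Real.exp 1 * p) ^ (a+1/2)
      + (∑ j ∈ Finset.range J, p ^ (((j:ℝ)+1)/2) * (11*(Real.exp 1 * p) ^ (a - (j:ℝ)/2)))
      + p ^ (((J:ℝ)+1)/2) ≤ 11 * (Real.exp 1 * p) ^ a := by
  have he1 : (2.7182818283 : ℝ) < Real.exp 1 := Real.exp_one_gt_d9
  have he2 : Real.exp 1 < 2.7182818286 := Real.exp_one_lt_d9
  set e1 := Real.exp 1 with he1def
  have hE0 : 0 < e1 * p := by positivity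
  set E := e1 * p with hEdef
  set q := p ^ (1/2 : ℝ) with hqdef
  set u := E ^ (1/2 : ℝ) with hudef
  have hq0 : 0 ≤ q := Real.rpow_nonneg hp0.le _
  have hu0 : 0 ≤ u := Real.rpow_nonneg hE0.le _
  have hupos : 0 < u := Real.rpow_pos_of_pos hE0 _
  have hq2 : q ^ 2 = p := by
    rw [hqdef, ← Real.rpow_natCast (p ^ (1/2:ℝ)) 2, ← Real.rpow_mul hp0.le]
    norm_num
  have hu2 : u ^ 2 = E := by
    rw [hudef, ← Real.rpow_natCast (E ^ (1/2:ℝ)) 2, ← Real.rpow_mul hE0.le]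
    norm_num
  have hq5 : q ≤ 1/5 := by nlinarith
  have hu33 : u ≤ 0.33 := by nlinarith
  set r := q * u⁻¹ with hrdef
  have hr0 : 0 ≤ r := by positivity
  have hr2 : r ^ 2 ≤ 4/9 := by
    have : r ^ 2 = p / E := by
      rw [hrdef]; field_simp; nlinarith
    rw [this, hEdef, div_le_iff₀ (by positivity)]
    nlinarith
  have hr23 : r ≤ 2/3 := by nlinarith
  have hEa : 0 < E ^ a := Real.rpow_pos_of_pos hE0 _
  have hsum : (∑ j ∈ Finset.range J, p ^ (((j:ℝ)+1)/2) * (11*E ^ (a - (j:ℝ)/2)))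
      ≤ 11 * E ^ a * q * 3 := by
    have hterm : ∀ j : ℕ, p ^ (((j:ℝ)+1)/2) * (11*E ^ (a - (j:ℝ)/2))
        = 11 * E ^ a * q * r ^ j := by
      intro j
      have hp1 : p ^ (((j:ℝ)+1)/2) = q ^ (j+1) := by
        rw [hqdef, ← Real.rpow_natCast (p ^ (1/2:ℝ)) (j+1), ← Real.rpow_mul hp0.le]
        push_cast; ring_nf
      have huj : u ^ j = E ^ ((j:ℝ)/2) := by
        rw [hudef, ← Real.rpow_natCast (E ^ (1/2:ℝ)) j, ← Real.rpow_mul hE0.le]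
        ring_nf
      have hEj : (0:ℝ) < E ^ ((j:ℝ)/2) := Real.rpow_pos_of_pos hE0 _
      have hE1 : E ^ (a - (j:ℝ)/2) = E ^ a * (u⁻¹) ^ j := by
        rw [inv_pow, huj, eq_comm]
        field_simp
        rw [← Real.rpow_add hE0]
        ring_nf
      rw [hp1, hE1, hrdef]
      rw [mul_pow, pow_succ]
      ring
    calc (∑ j ∈ Finset.range J, p ^ (((j:ℝ)+1)/2) * (11*E ^ (a - (j:ℝ)/2)))
        = ∑ j ∈ Finset.range J, 11 * E ^ a * q * r ^ j :=
          Finset.sum_congr rfl fun j _ => hterm j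
      _ = 11 * E ^ a * q * ∑ j ∈ Finset.range J, r ^ j := by rw [Finset.mul_sum]
      _ ≤ 11 * E ^ a * q * (1 - r)⁻¹ := by
          apply mul_le_mul_of_nonneg_left (geom_aux hr0 (by linarith) J) (by positivity)
      _ ≤ 11 * E ^ a * q * 3 := by
          apply mul_le_mul_of_nonneg_left _ (by positivity)
          rw [inv_le_comm₀ (by linarith) (by norm_num)]
          linarith
  have hpa : p ^ a ≤ E ^ a :=
    Real.rpow_le_rpow hp0.le (le_mul_of_one_le_left hp0.le (by linarith)) ha
  have h1 : p ^ (a+1) ≤ E ^ a * p := by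
    rw [Real.rpow_add hp0, Real.rpow_one]
    exact mul_le_mul_of_nonneg_right hpa hp0.le
  have h2 : E ^ (a+1/2) = E ^ a * u := by rw [Real.rpow_add hE0]
  have h3 : p ^ (((J:ℝ)+1)/2) ≤ E ^ a * q := by
    calc p ^ (((J:ℝ)+1)/2) ≤ p ^ (a + 1/2) :=
          Real.rpow_le_rpow_of_exponent_ge hp0 (by linarith) (by linarith)
      _ = p ^ a * q := by rw [Real.rpow_add hp0]
      _ ≤ E ^ a * q := mul_le_mul_of_nonneg_right hpa hq0
  have h2' : 11*E ^ (a+1/2) = 11*(E ^ a * u) := by rw [h2]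
  have b1 : E ^ a * p ≤ E ^ a * (1/25) := mul_le_mul_of_nonneg_left hp hEa.le
  have b2 : E ^ a * u ≤ E ^ a * 0.33 := mul_le_mul_of_nonneg_left hu33 hEa.le
  have b3 : E ^ a * q ≤ E ^ a * (1/5) := mul_le_mul_of_nonneg_left hq5 hEa.le
  linarith [h1, hsum, h3, h2', b1, b2, b3]

lemma cond_bound {Ω : Type*} {m0 : MeasurableSpace Ω} {μ : Measure Ω} [IsProbabilityMeasure μ]
    (ℱ : Filtration ℕ m0) (t : ℕ) {A B : Set Ω} (hA : MeasurableSet[ℱ t] A) (hB : MeasurableSet B)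
    {c : ℝ}
    (h : ∀ᵐ ω ∂μ, ω ∈ A → (μ[Set.indicator B (fun _ => (1 : ℝ)) | ℱ t]) ω ≤ c) :
    μ (A ∩ B) ≤ ENNReal.ofReal c * μ A := by
  have hAm : MeasurableSet A := ℱ.le t _ hA
  have hint : Integrable (B.indicator (fun _ => (1 : ℝ))) μ := (integrable_const 1).indicator hB
  have h1 : ∫ ω in A, B.indicator (fun _ => (1 : ℝ)) ω ∂μ = (μ (A ∩ B)).toReal := by
    rw [setIntegral_indicator hB, setIntegral_const]
    simp
    rfl
  have h2 : ∫ ω in A, (μ[Set.indicator B (fun _ => (1 : ℝ)) | ℱ t]) ω ∂μ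
      = ∫ ω in A, B.indicator (fun _ => (1 : ℝ)) ω ∂μ :=
    setIntegral_condExp (ℱ.le t) hint hA
  have h3 : ∫ ω in A, (μ[Set.indicator B (fun _ => (1 : ℝ)) | ℱ t]) ω ∂μ
      ≤ ∫ _ω in A, c ∂μ := by
    refine setIntegral_mono_ae_restrict integrable_condExp.integrableOn
      (integrableOn_const (measure_ne_top _ _)) ?_
    exact (ae_restrict_iff' hAm).2 h
  rw [setIntegral_const] at h3
  have hmu : (μ (A ∩ B)).toReal ≤ c * (μ A).toReal := by
    rw [← h1]
    rw [h2] at h3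
    calc ∫ ω in A, B.indicator (fun _ => (1 : ℝ)) ω ∂μ ≤ (μ A).toReal • c := h3
    _ = c * (μ A).toReal := by rw [smul_eq_mul]; ring
  calc μ (A ∩ B) = ENNReal.ofReal ((μ (A ∩ B)).toReal) :=
        (ENNReal.ofReal_toReal (measure_ne_top _ _)).symm
    _ ≤ ENNReal.ofReal (c * (μ A).toReal) := ENNReal.ofReal_le_ofReal hmu
    _ = ENNReal.ofReal c * ENNReal.ofReal ((μ A).toReal) :=
        ENNReal.ofReal_mul' ENNReal.toReal_nonneg
    _ = ENNReal.ofReal c * μ A := by rw [ENNReal.ofReal_toReal (measure_ne_top _ _)]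

/-- **occupation probabilities, Lemma 5.** Let `(X_t)` be a real-valued
process adapted to a filtration `(ℱ_t)` on a probability space such that for some
`p ≤ 1/25`: almost surely, on the event `{X_t > 1}` one has
`Pr(X_{t+1} ≥ X_t + a | ℱ_t) ≤ p^{a+1}` for all `a ≥ −1/2`, and on the event
`{X_t ≤ 1}` one has `Pr(X_{t+1} ≥ a + 1 | ℱ_t) ≤ p^{a+1}` for all `a ≥ 0`.
If `X_0 ≤ 1` a.s., then for all `t ≥ 1` and all `k > 1`,
`Pr(X_t ≥ 1 + k) ≤ 11·(e·p)^k`. -/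
theorem occupation_probability_strong_drift
    {Ω : Type*} {m0 : MeasurableSpace Ω} {μ : Measure Ω} [IsProbabilityMeasure μ]
    (ℱ : Filtration ℕ m0) (X : ℕ → Ω → ℝ) (hadp : Adapted ℱ X)
    (p : ℝ) (hp0 : 0 ≤ p) (hp : p ≤ 1 / 25)
    (htrans1 : ∀ t : ℕ, ∀ a : ℝ, -(1 / 2) ≤ a →
      ∀ᵐ ω ∂μ, 1 < X t ω →
        (μ[Set.indicator {ω' | X t ω' + a ≤ X (t + 1) ω'} (fun _ => (1 : ℝ)) | ℱ t]) ω ≤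
          p ^ (a + 1))
    (htrans2 : ∀ t : ℕ, ∀ a : ℝ, 0 ≤ a →
      ∀ᵐ ω ∂μ, X t ω ≤ 1 →
        (μ[Set.indicator {ω' | a + 1 ≤ X (t + 1) ω'} (fun _ => (1 : ℝ)) | ℱ t]) ω ≤
          p ^ (a + 1))
    (hX0 : ∀ᵐ ω ∂μ, X 0 ω ≤ 1) :
    ∀ t : ℕ, 1 ≤ t → ∀ k : ℝ, 1 < k →
      μ {ω | 1 + k ≤ X t ω} ≤ ENNReal.ofReal (11 * (Real.exp 1 * p) ^ k) := by
  have hXmF : ∀ s, Measurable[ℱ s] (X s) := fun s => (hadp s)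
  have hXm : ∀ s, Measurable (X s) := fun s => (hXmF s).mono (ℱ.le s) le_rfl
  intro t ht k hk
  rcases eq_or_lt_of_le hp0 with hpz | hppos
  · -- p = 0 case
    -- first: X s ≤ 1 a.s. for all s
    have hle1 : ∀ s : ℕ, ∀ᵐ ω ∂μ, X s ω ≤ 1 := by
      intro s
      induction s with
      | zero => exact hX0
      | succ s ihs =>
        have hc : ∀ᵐ ω ∂μ, ω ∈ (Set.univ : Set Ω) →
            (μ[Set.indicator {ω' | (0:ℝ) + 1 ≤ X (s+1) ω'} (fun _ => (1:ℝ)) | ℱ s]) ω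
              ≤ p ^ ((0:ℝ)+1) := by
          filter_upwards [ihs, htrans2 s 0 le_rfl] with ω h1 h2 _
          exact h2 h1
        have hB : MeasurableSet {ω | (0:ℝ) + 1 ≤ X (s+1) ω} :=
          measurableSet_le measurable_const (hXm (s+1))
        have hcb := cond_bound ℱ s MeasurableSet.univ hB hc
        rw [Set.univ_inter, measure_univ, mul_one] at hcb
        have hz : p ^ ((0:ℝ)+1) = 0 := by
          rw [← hpz]; rw [Real.zero_rpow (by norm_num)]
        rw [hz, ENNReal.ofReal_zero, le_zero_iff] at hcb
        have : ∀ᵐ ω ∂μ, ¬ ((0:ℝ) + 1 ≤ X (s+1) ω) := by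
          rw [ae_iff]
          simpa using hcb
        filter_upwards [this] with ω hω
        push_neg at hω
        linarith
    obtain ⟨s, rfl⟩ : ∃ s, t = s + 1 := ⟨t - 1, by omega⟩
    have hc : ∀ᵐ ω ∂μ, ω ∈ (Set.univ : Set Ω) →
        (μ[Set.indicator {ω' | k + 1 ≤ X (s+1) ω'} (fun _ => (1:ℝ)) | ℱ s]) ω
          ≤ p ^ (k+1) := by
      filter_upwards [hle1 s, htrans2 s k (by linarith)] with ω h1 h2 _
      exact h2 h1
    have hB : MeasurableSet {ω | k + 1 ≤ X (s+1) ω} :=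
      measurableSet_le measurable_const (hXm (s+1))
    have hcb := cond_bound ℱ s MeasurableSet.univ hB hc
    rw [Set.univ_inter, measure_univ, mul_one] at hcb
    have hz : p ^ (k+1) = 0 := by
      rw [← hpz]; rw [Real.zero_rpow (by linarith)]
    rw [hz, ENNReal.ofReal_zero, le_zero_iff] at hcb
    have hset : {ω | 1 + k ≤ X (s+1) ω} = {ω | k + 1 ≤ X (s+1) ω} := by
      ext ω; simp only [Set.mem_setOf_eq]; constructor <;> intro h <;> linarith
    rw [hset, hcb]
    exact zero_le
  · -- 0 < p case
    have hexp1 : (2:ℝ) ≤ Real.exp 1 := by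
      have := Real.add_one_le_exp (1:ℝ)
      linarith
    have hE0 : (0:ℝ) < Real.exp 1 * p := by positivity
    have key : ∀ s : ℕ, 1 ≤ s → ∀ a : ℝ, 0 ≤ a →
        μ {ω | 1 + a ≤ X s ω} ≤ ENNReal.ofReal (11 * (Real.exp 1 * p) ^ a) := by
      intro s
      induction s with
      | zero => intro h; exact absurd h (by omega)
      | succ s ih =>
        intro _ a ha
        have hBset : {ω | 1 + a ≤ X (s+1) ω} = {ω | a + 1 ≤ X (s+1) ω} := by
          ext ω; simp only [Set.mem_setOf_eq]; constructor <;> intro h <;> linarith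
        have hBm : MeasurableSet {ω | a + 1 ≤ X (s+1) ω} :=
          measurableSet_le measurable_const (hXm (s+1))
        have hpa : p ^ a ≤ (Real.exp 1 * p) ^ a :=
          Real.rpow_le_rpow hp0 (le_mul_of_one_le_left hp0 (by linarith)) ha
        have hEa0 : (0:ℝ) ≤ (Real.exp 1 * p) ^ a := Real.rpow_nonneg hE0.le a
        have hfinal : p ^ (a+1) ≤ 11 * (Real.exp 1 * p) ^ a := by
          have hr1 : p ^ (a+1) = p ^ a * p := by rw [Real.rpow_add hppos, Real.rpow_one]
          calc p ^ (a+1) = p ^ a * p := hr1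
            _ ≤ (Real.exp 1 * p) ^ a * 1 :=
                mul_le_mul hpa (by linarith) hppos.le hEa0
            _ ≤ 11 * (Real.exp 1 * p) ^ a := by linarith
        by_cases hs : 1 ≤ s
        · -- inductive step
          set J := ⌈2*a⌉₊ with hJdef
          have hJ2 : 2*a ≤ (J:ℝ) := Nat.le_ceil _
          have hJ1 : (J:ℝ) < 2*a + 1 := by
            exact_mod_cast Nat.ceil_lt_add_one (by linarith : (0:ℝ) ≤ 2*a)
          set B := {ω | a + 1 ≤ X (s+1) ω} with hBdef
          set Alow := {ω | X s ω ≤ 1} with hAlowdef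
          set Atail := {ω | 1 + (a + 1/2) ≤ X s ω} with hAtaildef
          set D := fun j : ℕ => {ω | 1 < X s ω ∧ a - (j:ℝ)/2 ≤ X s ω - 1 ∧
            X s ω - 1 < a + 1/2 - (j:ℝ)/2} with hDdef
          have hAlowM : MeasurableSet[ℱ s] Alow := measurableSet_le (hXmF s) measurable_const
          have hDM : ∀ j : ℕ, MeasurableSet[ℱ s] (D j) := fun j =>
            (measurableSet_lt measurable_const (hXmF s)).inter
              ((measurableSet_le measurable_const ((hXmF s).sub measurable_const)).inter
                (measurableSet_lt ((hXmF s).sub measurable_const) measurable_const))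
          have hcover : B ⊆ (Alow ∩ B) ∪ (Atail ∩ B) ∪ ⋃ j ∈ Finset.range (J+1), (D j ∩ B) := by
            intro ω hω
            by_cases h1 : X s ω ≤ 1
            · exact Or.inl (Or.inl ⟨h1, hω⟩)
            · push_neg at h1
              by_cases h2 : 1 + (a + 1/2) ≤ X s ω
              · exact Or.inl (Or.inr ⟨h2, hω⟩)
              · push_neg at h2
                right
                set c := a + 1/2 - (X s ω - 1) with hcdef
                have hc0 : 0 < c := by rw [hcdef]; linarith
                have hceil1 : 1 ≤ ⌈2*c⌉₊ := Nat.one_le_ceil_iff.2 (by linarith)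
                have hle : 2*c ≤ (⌈2*c⌉₊ : ℝ) := Nat.le_ceil _
                have hlt : (⌈2*c⌉₊ : ℝ) < 2*c + 1 := by
                  exact_mod_cast Nat.ceil_lt_add_one (by linarith : (0:ℝ) ≤ 2*c)
                have hmem : ⌈2*c⌉₊ - 1 ∈ Finset.range (J+1) := by
                  rw [Finset.mem_range]
                  have hca : 2*c ≤ 2*a + 1 := by rw [hcdef]; linarith
                  have h3 : ⌈2*c⌉₊ ≤ J + 1 := by
                    calc ⌈2*c⌉₊ ≤ ⌈2*a+1⌉₊ := Nat.ceil_le_ceil hca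
                      _ = J + 1 := by
                        rw [hJdef]
                        exact_mod_cast Nat.ceil_add_one (by linarith : (0:ℝ) ≤ 2*a)
                  omega
                have hjr : ((⌈2*c⌉₊ - 1 : ℕ) : ℝ) = (⌈2*c⌉₊ : ℝ) - 1 := by
                  push_cast [hceil1]
                  ring
                refine Set.mem_biUnion hmem ⟨⟨h1, ?_, ?_⟩, hω⟩
                · rw [hjr]
                  rw [hcdef] at hle
                  linarith
                · rw [hjr]
                  rw [hcdef] at hlt
                  linarith
          have hlow : μ (Alow ∩ B) ≤ ENNReal.ofReal (p ^ (a+1)) := by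
            have hc : ∀ᵐ ω ∂μ, ω ∈ Alow →
                (μ[Set.indicator B (fun _ => (1:ℝ)) | ℱ s]) ω ≤ p ^ (a+1) := by
              filter_upwards [htrans2 s a ha] with ω h hmem
              exact h hmem
            calc μ (Alow ∩ B) ≤ ENNReal.ofReal (p^(a+1)) * μ Alow :=
                  cond_bound ℱ s hAlowM hBm hc
              _ ≤ ENNReal.ofReal (p^(a+1)) * 1 := mul_le_mul_right prob_le_one _
              _ = ENNReal.ofReal (p^(a+1)) := mul_one _
          have htailb : μ (Atail ∩ B) ≤ ENNReal.ofReal (11 * (Real.exp 1 * p) ^ (a + 1/2)) :=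
            (measure_mono Set.inter_subset_left).trans (ih hs (a + 1/2) (by linarith))
          have hDB : ∀ j : ℕ, μ (D j ∩ B) ≤ ENNReal.ofReal (p ^ (((j:ℝ)+1)/2)) * μ (D j) := by
            intro j
            have hB'm : MeasurableSet {ω | X s ω + ((j:ℝ)-1)/2 ≤ X (s+1) ω} :=
              measurableSet_le ((hXm s).add_const _) (hXm (s+1))
            have hsub : D j ∩ B ⊆ D j ∩ {ω | X s ω + ((j:ℝ)-1)/2 ≤ X (s+1) ω} := by
              rintro ω ⟨hD1, hB1⟩
              refine ⟨hD1, ?_⟩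
              have h3 := hD1.2.2
              have h4 : a + 1 ≤ X (s+1) ω := hB1
              simp only [Set.mem_setOf_eq]
              linarith
            have hcnd : ∀ᵐ ω ∂μ, ω ∈ D j →
                (μ[Set.indicator {ω' | X s ω' + ((j:ℝ)-1)/2 ≤ X (s+1) ω'}
                  (fun _ => (1:ℝ)) | ℱ s]) ω ≤ p ^ (((j:ℝ)+1)/2) := by
              have hexp : ((j:ℝ)-1)/2 + 1 = ((j:ℝ)+1)/2 := by ring
              have hjnn : (0:ℝ) ≤ (j:ℝ) := Nat.cast_nonneg j
              filter_upwards [htrans1 s (((j:ℝ)-1)/2) (by linarith)] with ω h hmem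
              have h5 := h hmem.1
              rwa [hexp] at h5
            exact (measure_mono hsub).trans (cond_bound ℱ s (hDM j) hB'm hcnd)
          have hDj : ∀ j ∈ Finset.range J,
              μ (D j) ≤ ENNReal.ofReal (11*(Real.exp 1*p) ^ (a - (j:ℝ)/2)) := by
            intro j hj
            have hj0 : j + 1 ≤ J := Finset.mem_range.1 hj
            have hj' : (j:ℝ) + 1 ≤ (J:ℝ) := by exact_mod_cast hj0
            have haj : 0 ≤ a - (j:ℝ)/2 := by linarith
            refine (measure_mono ?_).trans (ih hs _ haj)
            intro ω hω
            have h6 := hω.2.1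
            simp only [Set.mem_setOf_eq]
            linarith
          have hsumnn : ∀ j ∈ Finset.range J,
              (0:ℝ) ≤ p ^ (((j:ℝ)+1)/2) * (11*(Real.exp 1*p) ^ (a - (j:ℝ)/2)) := by
            intro j _
            positivity
          calc μ {ω | 1 + a ≤ X (s+1) ω} = μ B := by rw [hBset]
            _ ≤ μ ((Alow ∩ B) ∪ (Atail ∩ B) ∪ ⋃ j ∈ Finset.range (J+1), (D j ∩ B)) :=
                measure_mono hcover
            _ ≤ μ ((Alow ∩ B) ∪ (Atail ∩ B)) + μ (⋃ j ∈ Finset.range (J+1), (D j ∩ B)) :=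
                measure_union_le _ _
            _ ≤ (μ (Alow ∩ B) + μ (Atail ∩ B)) + ∑ j ∈ Finset.range (J+1), μ (D j ∩ B) :=
                add_le_add (measure_union_le _ _) (measure_biUnion_finset_le _ _)
            _ ≤ (ENNReal.ofReal (p^(a+1)) + ENNReal.ofReal (11*(Real.exp 1*p)^(a+1/2)))
                + ∑ j ∈ Finset.range (J+1), ENNReal.ofReal (p ^ (((j:ℝ)+1)/2)) * μ (D j) :=
                add_le_add (add_le_add hlow htailb) (Finset.sum_le_sum fun j _ => hDB j)
            _ = (ENNReal.ofReal (p^(a+1)) + ENNReal.ofReal (11*(Real.exp 1*p)^(a+1/2)))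
                + (∑ j ∈ Finset.range J, ENNReal.ofReal (p ^ (((j:ℝ)+1)/2)) * μ (D j)
                  + ENNReal.ofReal (p ^ (((J:ℝ)+1)/2)) * μ (D J)) := by
                rw [Finset.sum_range_succ]
            _ ≤ (ENNReal.ofReal (p^(a+1)) + ENNReal.ofReal (11*(Real.exp 1*p)^(a+1/2)))
                + (∑ j ∈ Finset.range J, ENNReal.ofReal (p ^ (((j:ℝ)+1)/2))
                      * ENNReal.ofReal (11*(Real.exp 1*p) ^ (a - (j:ℝ)/2))
                  + ENNReal.ofReal (p ^ (((J:ℝ)+1)/2)) * 1) :=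
                add_le_add le_rfl (add_le_add
                  (Finset.sum_le_sum fun j hj => mul_le_mul_right (hDj j hj) _)
                  (mul_le_mul_right prob_le_one _))
            _ = ENNReal.ofReal ((p^(a+1) + 11*(Real.exp 1*p)^(a+1/2))
                + ((∑ j ∈ Finset.range J, p ^ (((j:ℝ)+1)/2) * (11*(Real.exp 1*p) ^ (a - (j:ℝ)/2)))
                  + p ^ (((J:ℝ)+1)/2))) := by
                rw [mul_one]
                rw [Finset.sum_congr rfl (fun j (hj : j ∈ Finset.range J) =>
                  (ENNReal.ofReal_mul (by positivity : (0:ℝ) ≤ p ^ (((j:ℝ)+1)/2))).symm)]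
                rw [← ENNReal.ofReal_sum_of_nonneg hsumnn]
                rw [← ENNReal.ofReal_add (by positivity) (by positivity)]
                rw [← ENNReal.ofReal_add (Finset.sum_nonneg hsumnn) (by positivity)]
                rw [← ENNReal.ofReal_add (by positivity)
                  (add_nonneg (Finset.sum_nonneg hsumnn) (by positivity))]
            _ ≤ ENNReal.ofReal (11 * (Real.exp 1 * p) ^ a) := by
                refine ENNReal.ofReal_le_ofReal ?_
                have hkr := key_real p hppos hp a ha J hJ2
                linarith
        · -- base case s = 0
          have hs0 : s = 0 := by omega
          subst hs0
          have hc : ∀ᵐ ω ∂μ, ω ∈ (Set.univ : Set Ω) →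
              (μ[Set.indicator {ω' | a + 1 ≤ X (0+1) ω'} (fun _ => (1:ℝ)) | ℱ 0]) ω
                ≤ p ^ (a+1) := by
            filter_upwards [hX0, htrans2 0 a ha] with ω h1 h2 _
            exact h2 h1
          have hcb := cond_bound ℱ 0 MeasurableSet.univ hBm hc
          rw [Set.univ_inter, measure_univ, mul_one] at hcb
          rw [hBset]
          exact hcb.trans (ENNReal.ofReal_le_ofReal hfinal)
    exact key t ht k (by linarith)
end
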